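/- Let X be a locally compact, σ-compact topological space, K ⊆ X a compact subset, and f, f' : [0,∞) → X proper continuous maps whose images are disjoint from K. If f and f' are properly homotopic in X, then they are properly homotopic via a homotopy whose image is disjoint from K, i.e. they are properly homotopic as maps into X \ K. -/

import Mathlib

open scoped NNReal

/-- A map is proper if it is continuous and preimages of compact sets are compact. -/
def ProperMap {A B : Type*} [TopologicalSpace A] [TopologicalSpace B] (f : A → B) : Prop :=
  Continuous f ∧ ∀ K : Set B, IsCompact K → IsCompact (f ⁻¹' K)

/-- Two maps are properly homotopic if there is a homotopy between them which is proper. -/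
def ProperlyHomotopic {A B : Type*} [TopologicalSpace A] [TopologicalSpace B]
    (f g : A → B) : Prop :=
  ∃ H : A × unitInterval → B, ProperMap H ∧ (∀ a, H (a, 0) = f a) ∧ (∀ a, H (a, 1) = g a)

/-- If two proper rays in a locally compact σ-compact space have images disjoint from a
compact set `K` and are properly homotopic, then they are properly homotopic via a
homotopy whose image is disjoint from `K`. -/
theorem stmt2 {X : Type*} [TopologicalSpace X] [LocallyCompactSpace X] [SigmaCompactSpace X]
    (K : Set X) (hK : IsCompact K)
    (f f' : ℝ≥0 → X) (hf : ProperMap f) (hf' : ProperMap f')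
    (hfK : ∀ s, f s ∉ K) (hf'K : ∀ s, f' s ∉ K)
    (h : ProperlyHomotopic f f') :
    ∃ H : ℝ≥0 × unitInterval → X, ProperMap H ∧ (∀ s, H (s, 0) = f s) ∧
      (∀ s, H (s, 1) = f' s) ∧ ∀ p, H p ∉ K := by
  obtain ⟨H, hH, hH0, hH1⟩ := h
  set Z₀ : Set (ℝ≥0 × unitInterval) := H ⁻¹' K with hZ₀def
  have hZ₀ : IsCompact Z₀ := hH.2 K hK
  -- bound on first coordinate
  obtain ⟨M, hM⟩ : ∃ M : ℝ≥0, ∀ p ∈ Z₀, p.1 ≤ M := by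
    obtain ⟨M, hM⟩ := (hZ₀.image continuous_fst).bddAbove
    exact ⟨M, fun p hp => hM ⟨p, hp, rfl⟩⟩
  -- second coordinate bounded away from 0 and 1
  obtain ⟨ε, hε, hεZ⟩ : ∃ ε : ℝ, 0 < ε ∧ ∀ p ∈ Z₀, ε ≤ min (p.2 : ℝ) (1 - (p.2 : ℝ)) := by
    by_cases hne : Z₀.Nonempty
    · have hcont : Continuous fun p : ℝ≥0 × unitInterval => min (p.2 : ℝ) (1 - (p.2 : ℝ)) :=
        (continuous_subtype_val.comp continuous_snd).min
          (continuous_const.sub (continuous_subtype_val.comp continuous_snd))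
      obtain ⟨p₀, hp₀Z, hp₀⟩ := hZ₀.exists_isMinOn hne hcont.continuousOn
      refine ⟨min (p₀.2 : ℝ) (1 - (p₀.2 : ℝ)), ?_, fun p hp => hp₀ hp⟩
      have ht0 : (p₀.2 : ℝ) ≠ 0 := by
        intro h0
        have : p₀.2 = 0 := Subtype.ext h0
        have := hp₀Z
        rw [hZ₀def] at this
        have hK' : H p₀ ∈ K := this
        rw [show p₀ = (p₀.1, p₀.2) from rfl, ‹p₀.2 = 0›, hH0] at hK'
        exact hfK p₀.1 hK'
      have ht1 : (p₀.2 : ℝ) ≠ 1 := by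
        intro h1
        have : p₀.2 = 1 := Subtype.ext h1
        have hK' : H p₀ ∈ K := hp₀Z
        rw [show p₀ = (p₀.1, p₀.2) from rfl, ‹p₀.2 = 1›, hH1] at hK'
        exact hf'K p₀.1 hK'
      have h01 := p₀.2.2
      simp only [Set.mem_Icc] at h01
      have : 0 < (p₀.2 : ℝ) := lt_of_le_of_ne h01.1 (Ne.symm ht0)
      have : (p₀.2 : ℝ) < 1 := lt_of_le_of_ne h01.2 ht1
      simp only [lt_min_iff]
      constructor <;> linarith
    · exact ⟨1, one_pos, fun p hp => absurd ⟨p, hp⟩ hne⟩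
  -- the bump function
  set c : unitInterval → ℝ≥0 :=
    fun t => Real.toNNReal ((((M : ℝ) + 1) / ε) * min (t : ℝ) (1 - (t : ℝ))) with hcdef
  have hc : Continuous c := by
    exact continuous_real_toNNReal.comp <| continuous_const.mul (continuous_subtype_val.min
      (continuous_const.sub continuous_subtype_val))
  have hc0 : c 0 = 0 := by simp [hcdef]
  have hc1 : c 1 = 0 := by simp [hcdef]
  -- the modified homotopy
  refine ⟨fun p => H (max p.1 (c p.2), p.2), ⟨?_, ?_⟩, ?_, ?_, ?_⟩
  · exact hH.1.comp ((continuous_fst.max (hc.comp continuous_snd)).prodMk continuous_snd)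
  · intro C hC
    have hZ : IsCompact (H ⁻¹' C) := hH.2 C hC
    obtain ⟨N, hN⟩ : ∃ N : ℝ≥0, ∀ p ∈ H ⁻¹' C, p.1 ≤ N := by
      obtain ⟨N, hN⟩ := (hZ.image continuous_fst).bddAbove
      exact ⟨N, fun p hp => hN ⟨p, hp, rfl⟩⟩
    obtain ⟨C₀, hC₀⟩ : ∃ C₀ : ℝ≥0, ∀ t, c t ≤ C₀ := by
      obtain ⟨C₀, hC₀⟩ := (isCompact_range hc).bddAbove
      exact ⟨C₀, fun t => hC₀ ⟨t, rfl⟩⟩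
    have hcl : IsClosed ((fun p : ℝ≥0 × unitInterval => H (max p.1 (c p.2), p.2)) ⁻¹' C) := by
      exact IsClosed.preimage
        ((continuous_fst.max (hc.comp continuous_snd)).prodMk continuous_snd) hZ.isClosed
    refine IsCompact.of_isClosed_subset ((isCompact_Icc (a := (0:ℝ≥0)) (b := max N C₀)).prod
      isCompact_univ) hcl ?_
    rintro ⟨s, t⟩ hp
    have hmem : ((max s (c t), t) : ℝ≥0 × unitInterval) ∈ H ⁻¹' C := hp
    have hb := hN _ hmem
    simp only [max_le_iff] at hb
    exact ⟨⟨zero_le, le_trans hb.1 (le_max_left _ _)⟩, trivial⟩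
  · intro s
    show H (max s (c 0), (0:unitInterval)) = f s
    rw [hc0, max_eq_left (zero_le : (0:ℝ≥0) ≤ s)]; exact hH0 s
  · intro s
    show H (max s (c 1), (1:unitInterval)) = f' s
    rw [hc1, max_eq_left (zero_le : (0:ℝ≥0) ≤ s)]; exact hH1 s
  · rintro ⟨s, t⟩ hmem
    have hZmem : ((max s (c t), t) : ℝ≥0 × unitInterval) ∈ Z₀ := hmem
    have h1 := hM _ hZmem
    have h2 := hεZ _ hZmem
    simp only at h1 h2
    -- c t ≤ M
    have hcle : (c t : ℝ) ≤ (M : ℝ) := by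
      have : c t ≤ M := le_trans (le_max_right s (c t)) h1
      exact_mod_cast this
    -- but c t ≥ M + 1
    have hr : ((M : ℝ) + 1) ≤ (((M : ℝ) + 1) / ε) * min (t : ℝ) (1 - (t : ℝ)) := by
      rw [div_mul_eq_mul_div, le_div_iff₀ hε]
      have hM0 : (0:ℝ) ≤ (M : ℝ) + 1 := by positivity
      calc ((M:ℝ) + 1) * ε ≤ ((M:ℝ) + 1) * min (t : ℝ) (1 - (t : ℝ)) := by
            exact mul_le_mul_of_nonneg_left h2 hM0
        _ = _ := rfl
    have hge : ((M : ℝ) + 1) ≤ (c t : ℝ) := by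
      rw [hcdef]
      simp only [Real.coe_toNNReal', le_max_iff]
      left; exact hr
    linarith
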